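/- Let f : X → Y be a morphism in a Krull-Schmidt additive category that is right C-determined for some object C. If C' is indecomposable and some morphism f' : C' → Y almost factors through f, then C' is a direct summand of C. -/
import Mathlib


open CategoryTheory CategoryTheory.Limits

universe v u u'

variable {C : Type u} [Category.{v} C]

/-- `f` is right `Cd`-determined. -/
def RightDetermined {X Y : C} (f : X ⟶ Y) (Cd : C) : Prop :=
  ∀ ⦃T : C⦄ (g : T ⟶ Y), (∀ h : Cd ⟶ T, ∃ s : Cd ⟶ X, h ≫ g = s ≫ f) →
    ∃ t : T ⟶ X, g = t ≫ f

def LeftDetermined {X Y : C} (f : X ⟶ Y) (Kd : C) : Prop :=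
  ∀ ⦃T : C⦄ (g : X ⟶ T), (∀ h : T ⟶ Kd, ∃ s : Y ⟶ Kd, g ≫ h = f ≫ s) →
    ∃ t : Y ⟶ T, g = f ≫ t

def IsSummand (Z X : C) : Prop := ∃ (s : Z ⟶ X) (r : X ⟶ Z), s ≫ r = 𝟙 Z

section Preadd
variable [Preadditive C]

/-- membership in the radical of the category, via the Jacobson radical of `End`. -/
def radHom {T Z : C} (h : T ⟶ Z) : Prop :=
  ∀ u : Z ⟶ T, (u ≫ h : CategoryTheory.End Z) ∈ Ideal.jacobson (⊥ : Ideal (CategoryTheory.End Z))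

def AlmostFactorsThrough {X Y Z : C} (g : Z ⟶ Y) (f : X ⟶ Y) : Prop :=
  ¬ (∃ s : Z ⟶ X, g = s ≫ f) ∧
    ∀ ⦃T : C⦄ (h : T ⟶ Z), radHom h → ∃ s : T ⟶ X, h ≫ g = s ≫ f

def Indec (Z : C) : Prop :=
  ¬ Limits.IsZero Z ∧ ∀ e : Z ⟶ Z, e ≫ e = e → e = 0 ∨ e = 𝟙 Z

end Preadd

def RightAlmostSplit {E Y : C} (d : E ⟶ Y) : Prop :=
  ¬ (∃ s : Y ⟶ E, s ≫ d = 𝟙 Y) ∧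
    ∀ ⦃T : C⦄ (g : T ⟶ Y), ¬ (∃ s : Y ⟶ T, s ≫ g = 𝟙 Y) → ∃ t : T ⟶ E, t ≫ d = g

def LeftAlmostSplit {X E : C} (i : X ⟶ E) : Prop :=
  ¬ (∃ r : E ⟶ X, i ≫ r = 𝟙 X) ∧
    ∀ ⦃T : C⦄ (g : X ⟶ T), ¬ (∃ r : T ⟶ X, g ≫ r = 𝟙 X) → ∃ t : E ⟶ T, i ≫ t = g

def RightMinimal {X Y : C} (f : X ⟶ Y) : Prop :=
  ∀ g : X ⟶ X, g ≫ f = f → IsIso g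

def RightEquiv {X X' Y : C} (f : X ⟶ Y) (f' : X' ⟶ Y) : Prop :=
  (∃ u : X ⟶ X', f = u ≫ f') ∧ (∃ v : X' ⟶ X, f' = v ≫ f)

/-- A Quillen exact structure on an additive category. -/
class ExactStruct (C : Type u) [Category.{v} C] [Preadditive C] [HasZeroObject C]
    [HasBinaryBiproducts C] where
  IsConflation : ∀ {X E Y : C}, (X ⟶ E) → (E ⟶ Y) → Prop
  comp_zero : ∀ {X E Y : C} {i : X ⟶ E} {d : E ⟶ Y}, IsConflation i d → i ≫ d = 0
  isKernel : ∀ {X E Y : C} {i : X ⟶ E} {d : E ⟶ Y}, IsConflation i d →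
    ∀ {T : C} (g : T ⟶ E), g ≫ d = 0 → ∃! t : T ⟶ X, t ≫ i = g
  isCokernel : ∀ {X E Y : C} {i : X ⟶ E} {d : E ⟶ Y}, IsConflation i d →
    ∀ {T : C} (g : E ⟶ T), i ≫ g = 0 → ∃! t : Y ⟶ T, d ≫ t = g
  split_conflation : ∀ X Y : C, IsConflation (biprod.inl : X ⟶ X ⊞ Y) (biprod.snd : X ⊞ Y ⟶ Y)
  defl_comp : ∀ {X Y Z : C} (d : X ⟶ Y) (d' : Y ⟶ Z),
    (∃ (K : C) (i : K ⟶ X), IsConflation i d) → (∃ (K : C) (i : K ⟶ Y), IsConflation i d') →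
    ∃ (K : C) (i : K ⟶ X), IsConflation i (d ≫ d')
  infl_comp : ∀ {X Y Z : C} (i : X ⟶ Y) (i' : Y ⟶ Z),
    (∃ (W : C) (d : Y ⟶ W), IsConflation i d) → (∃ (W : C) (d : Z ⟶ W), IsConflation i' d) →
    ∃ (W : C) (d : Z ⟶ W), IsConflation (i ≫ i') d
  pullback_defl : ∀ {X Y Z : C} (d : X ⟶ Y) (g : Z ⟶ Y),
    (∃ (K : C) (i : K ⟶ X), IsConflation i d) →
    ∃ (E : C) (g' : E ⟶ X) (d' : E ⟶ Z), IsPullback g' d' d g ∧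
      ∃ (K : C) (i : K ⟶ E), IsConflation i d'
  pushout_infl : ∀ {X Y Z : C} (i : X ⟶ Y) (g : X ⟶ Z),
    (∃ (W : C) (d : Y ⟶ W), IsConflation i d) →
    ∃ (E : C) (i' : Z ⟶ E) (g' : Y ⟶ E), IsPushout i g g' i' ∧
      ∃ (W : C) (d : E ⟶ W), IsConflation i' d

section Exact
variable [Preadditive C] [HasZeroObject C] [HasBinaryBiproducts C] [ExactStruct C]

def IsDeflation {X Y : C} (d : X ⟶ Y) : Prop :=
  ∃ (K : C) (i : K ⟶ X), ExactStruct.IsConflation i d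

def IsInflation {X Y : C} (i : X ⟶ Y) : Prop :=
  ∃ (Z : C) (d : Y ⟶ Z), ExactStruct.IsConflation i d

/-- projectively trivial morphisms: those factoring through every deflation onto the target. -/
def ProjTrivial {X Y : C} (f : X ⟶ Y) : Prop :=
  ∀ ⦃E : C⦄ (d : E ⟶ Y), IsDeflation d → ∃ g : X ⟶ E, f = g ≫ d

/-- injectively trivial morphisms: those factoring through every inflation from the source. -/
def InjTrivial {X Y : C} (f : X ⟶ Y) : Prop :=
  ∀ ⦃E : C⦄ (i : X ⟶ E), IsInflation i → ∃ g : E ⟶ Y, f = i ≫ g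

/-- `f` factors through `α` in the projectively stable category. -/
def StablyFactors {T X Y : C} (f : T ⟶ Y) (α : X ⟶ Y) : Prop :=
  ∃ g : T ⟶ X, ProjTrivial (f - g ≫ α)

/-- `α` is right `Cd`-determined in the projectively stable category. -/
def RightDeterminedStable {X Y : C} (α : X ⟶ Y) (Cd : C) : Prop :=
  ∀ ⦃T : C⦄ (g : T ⟶ Y), (∀ h : Cd ⟶ T, StablyFactors (h ≫ g) α) → StablyFactors g α

/-- `X ≅ Y` in the projectively stable category. -/
def StablyIso (X Y : C) : Prop :=
  ∃ (f : X ⟶ Y) (g : Y ⟶ X), ProjTrivial (f ≫ g - 𝟙 X) ∧ ProjTrivial (g ≫ f - 𝟙 Y)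

def ProjObj (P : C) : Prop :=
  ∀ ⦃E : C⦄ (d : E ⟶ P), IsDeflation d → ∃ s : P ⟶ E, s ≫ d = 𝟙 P

def InjObj (I : C) : Prop :=
  ∀ ⦃E : C⦄ (i : I ⟶ E), IsInflation i → ∃ r : E ⟶ I, i ≫ r = 𝟙 I

def AlmostSplitConflation {X E Y : C} (i : X ⟶ E) (d : E ⟶ Y) : Prop :=
  ExactStruct.IsConflation i d ∧ LeftAlmostSplit i ∧ RightAlmostSplit d

/-- membership in `𝒞_l`: every indecomposable direct summand is injective or is the first
term of an almost split conflation. -/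
def MemCl (K : C) : Prop :=
  ∀ Z : C, IsSummand Z K → Indec Z →
    InjObj Z ∨ ∃ (E W : C) (i : Z ⟶ E) (d : E ⟶ W), AlmostSplitConflation i d

/-- membership in `𝒞_r`: every indecomposable direct summand is projective or is the third
term of an almost split conflation. -/
def MemCr (X : C) : Prop :=
  ∀ Z : C, IsSummand Z X → Indec Z →
    ProjObj Z ∨ ∃ (K E : C) (i : K ⟶ E) (d : E ⟶ Z), AlmostSplitConflation i d

end Exact

/-- Krull–Schmidt: every object is a finite biproduct of objects with local endomorphism ring. -/
class KrullSchmidtCat (C : Type u) [Category.{v} C] [Preadditive C]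
    [HasFiniteBiproducts C] : Prop where
  decomp : ∀ X : C, ∃ (n : ℕ) (f : Fin n → C),
    (∀ i, IsLocalRing (CategoryTheory.End (f i))) ∧ Nonempty (X ≅ ⨁ f)



section AuxRing
variable {R : Type u'} [Ring R] [IsLocalRing R]

lemma aux_isUnit_of_left_inv {x y : R} (h : y * x = 1) : IsUnit x := by
  rcases IsLocalRing.isUnit_or_isUnit_of_add_one (a := x * y) (b := 1 - x * y)
    (by abel) with hu | hu
  · have hyxy : y * (x * y) = y := by rw [← mul_assoc, h, one_mul]
    have hid : (x * y) * (x * y) = (x * y) * 1 := by rw [mul_assoc, hyxy, mul_one]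
    have h1 : x * y = 1 := hu.mul_left_cancel hid
    exact isUnit_iff_exists.mpr ⟨y, h1, h⟩
  · exfalso
    have h0 : (1 - x * y) * x = 0 := by
      rw [sub_mul, one_mul, mul_assoc, h, mul_one, sub_self]
    rcases hu.exists_left_inv with ⟨c, hc⟩
    have hx0 : x = 0 := by
      calc x = (c * (1 - x * y)) * x := by rw [hc, one_mul]
        _ = c * ((1 - x * y) * x) := by rw [mul_assoc]
        _ = 0 := by rw [h0, mul_zero]
    rw [hx0, mul_zero] at h
    exact zero_ne_one h

lemma aux_isUnit_of_not_mem_jacobson_bot {x : R}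
    (h : x ∉ Ideal.jacobson (⊥ : Ideal R)) : IsUnit x := by
  by_contra hx
  apply h
  rw [Ideal.jacobson]
  refine Submodule.mem_sInf.mpr (fun J hJ => ?_)
  obtain ⟨-, hJmax⟩ := hJ
  by_contra hxJ
  have hnle : ¬ Ideal.span {x} ≤ J :=
    fun hle => hxJ (hle (Ideal.subset_span (Set.mem_singleton x)))
  have htop : J ⊔ Ideal.span {x} = ⊤ := hJmax.1.2 _ (left_lt_sup.mpr hnle)
  have h1 : (1 : R) ∈ J ⊔ Ideal.span {x} := by rw [htop]; exact Submodule.mem_top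
  rcases Submodule.mem_sup.mp h1 with ⟨j, hjJ, z, hz, hjz⟩
  rcases Submodule.mem_span_singleton.mp hz with ⟨a, rfl⟩
  rw [smul_eq_mul] at hjz
  rcases IsLocalRing.isUnit_or_isUnit_of_add_one hjz with hu | hu
  · exact hJmax.1.1 (Ideal.eq_top_of_isUnit_mem J hjJ hu)
  · rcases hu.exists_left_inv with ⟨c, hc⟩
    rw [← mul_assoc] at hc
    exact hx (aux_isUnit_of_left_inv hc)

end AuxRing

section Aux
variable [Preadditive C]

lemma isLocalRing_End_of_iso {Z W : C} (e : Z ≅ W) (h : IsLocalRing (CategoryTheory.End W)) :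
    IsLocalRing (CategoryTheory.End Z) := by
  haveI := h
  have hadd : ∀ a b : CategoryTheory.End Z, e.conj (a + b) = e.conj a + e.conj b := by
    intro a b
    simp only [Iso.conj_apply]
    show e.inv ≫ (a + b) ≫ e.hom = e.inv ≫ a ≫ e.hom + e.inv ≫ b ≫ e.hom
    rw [show a + b = (a : Z ⟶ Z) + (b : Z ⟶ Z) from rfl]
    rw [Preadditive.add_comp, Preadditive.comp_add]
  have hzero : e.conj (0 : CategoryTheory.End Z) = 0 := by
    simp [Iso.conj_apply]
  have hunit : ∀ a : CategoryTheory.End Z, IsUnit (e.conj a) → IsUnit a := by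
    intro a ha
    rcases isUnit_iff_exists.mp ha with ⟨c, hc1, hc2⟩
    refine isUnit_iff_exists.mpr ⟨e.symm.conj c, ?_, ?_⟩
    · calc a * e.symm.conj c = e.symm.conj (e.conj a) * e.symm.conj c := by
            rw [Iso.symm_self_conj]
        _ = e.symm.conj (e.conj a * c) := (map_mul _ _ _).symm
        _ = 1 := by rw [hc1, map_one]
    · calc e.symm.conj c * a = e.symm.conj c * e.symm.conj (e.conj a) := by
            rw [Iso.symm_self_conj]
        _ = e.symm.conj (c * e.conj a) := (map_mul _ _ _).symm
        _ = 1 := by rw [hc2, map_one]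
  have hnt : Nontrivial (CategoryTheory.End Z) := by
    refine ⟨0, 1, fun h01 => ?_⟩
    have h2 : e.conj 0 = e.conj 1 := by rw [h01]
    rw [map_one, hzero] at h2
    exact zero_ne_one h2
  exact { toNontrivial := hnt
          isUnit_or_isUnit_of_add_one := fun {a b} hab => by
            have h3 : e.conj a + e.conj b = 1 := by rw [← hadd, hab, map_one]
            rcases IsLocalRing.isUnit_or_isUnit_of_add_one h3 with h' | h'
            · exact Or.inl (hunit a h')
            · exact Or.inr (hunit b h') }

lemma isLocalRing_End_of_indec [HasFiniteBiproducts C] [KrullSchmidtCat C]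
    (Z : C) (hZ : Indec Z) : IsLocalRing (CategoryTheory.End Z) := by
  obtain ⟨n, g, hloc, ⟨e⟩⟩ := KrullSchmidtCat.decomp (C := C) Z
  have hidem : ∀ i : Fin n,
      (e.hom ≫ biproduct.π g i ≫ biproduct.ι g i ≫ e.inv) ≫
        (e.hom ≫ biproduct.π g i ≫ biproduct.ι g i ≫ e.inv) =
      e.hom ≫ biproduct.π g i ≫ biproduct.ι g i ≫ e.inv := by
    intro i
    simp [biproduct.ι_π_self_assoc]
  have hsum : ∑ i : Fin n, (e.hom ≫ biproduct.π g i ≫ biproduct.ι g i ≫ e.inv) = 𝟙 Z := by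
    calc ∑ i : Fin n, (e.hom ≫ biproduct.π g i ≫ biproduct.ι g i ≫ e.inv)
        = e.hom ≫ (∑ j : Fin n, biproduct.π g j ≫ biproduct.ι g j) ≫ e.inv := by
          rw [Preadditive.sum_comp, Preadditive.comp_sum]
          simp
      _ = 𝟙 Z := by rw [biproduct.total]; simp
  have hnz : ¬ (𝟙 Z = 0) := fun h => hZ.1 ((Limits.IsZero.iff_id_eq_zero Z).mpr h)
  have hone : ∃ i : Fin n, e.hom ≫ biproduct.π g i ≫ biproduct.ι g i ≫ e.inv = 𝟙 Z := by
    by_contra hc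
    push_neg at hc
    have hall : ∀ i, e.hom ≫ biproduct.π g i ≫ biproduct.ι g i ≫ e.inv = 0 :=
      fun i => (hZ.2 _ (hidem i)).resolve_right (hc i)
    apply hnz
    rw [← hsum]
    simp [hall]
  obtain ⟨i, hi⟩ := hone
  haveI := hloc i
  have hsr : (e.hom ≫ biproduct.π g i) ≫ (biproduct.ι g i ≫ e.inv) = 𝟙 Z := by
    rw [← hi]; simp
  -- the idempotent on g i
  have hpp : ((biproduct.ι g i ≫ e.inv) ≫ (e.hom ≫ biproduct.π g i)) ≫
      ((biproduct.ι g i ≫ e.inv) ≫ (e.hom ≫ biproduct.π g i)) =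
      (biproduct.ι g i ≫ e.inv) ≫ (e.hom ≫ biproduct.π g i) := by
    calc ((biproduct.ι g i ≫ e.inv) ≫ (e.hom ≫ biproduct.π g i)) ≫
        ((biproduct.ι g i ≫ e.inv) ≫ (e.hom ≫ biproduct.π g i))
        = (biproduct.ι g i ≫ e.inv) ≫
            ((e.hom ≫ biproduct.π g i) ≫ ((biproduct.ι g i ≫ e.inv))) ≫
            (e.hom ≫ biproduct.π g i) := by simp only [Category.assoc]
      _ = _ := by rw [hsr, Category.id_comp]
  set p : CategoryTheory.End (g i) :=
    (biproduct.ι g i ≫ e.inv) ≫ (e.hom ≫ biproduct.π g i) with hp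
  have hmul : p * p = p * 1 := by
    show p ≫ p = 𝟙 (g i) ≫ p
    rw [Category.id_comp]
    exact hpp
  rcases IsLocalRing.isUnit_or_isUnit_of_add_one (a := p) (b := 1 - p) (by abel) with hu | hu
  · have hp1 : p = 1 := hu.mul_left_cancel hmul
    have hrs : (biproduct.ι g i ≫ e.inv) ≫ (e.hom ≫ biproduct.π g i) = 𝟙 (g i) := hp1
    exact isLocalRing_End_of_iso ⟨e.hom ≫ biproduct.π g i, biproduct.ι g i ≫ e.inv, hsr, hrs⟩
      (hloc i)
  · exfalso
    have hp0 : p = 0 := by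
      rcases hu.exists_right_inv with ⟨q, hq⟩
      have h0 : p * (1 - p) = 0 := by
        rw [mul_sub, mul_one]
        have : p * p = p := by rw [hmul, mul_one]
        rw [this, sub_self]
      calc p = p * ((1 - p) * q) := by rw [hq, mul_one]
        _ = (p * (1 - p)) * q := by rw [mul_assoc]
        _ = 0 := by rw [h0, zero_mul]
    have hrs0 : (biproduct.ι g i ≫ e.inv) ≫ (e.hom ≫ biproduct.π g i) = 0 := hp0
    apply hnz
    calc 𝟙 Z = ((e.hom ≫ biproduct.π g i) ≫ (biproduct.ι g i ≫ e.inv)) ≫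
          ((e.hom ≫ biproduct.π g i) ≫ (biproduct.ι g i ≫ e.inv)) := by
          rw [hsr, Category.id_comp]
      _ = (e.hom ≫ biproduct.π g i) ≫
            ((biproduct.ι g i ≫ e.inv) ≫ (e.hom ≫ biproduct.π g i)) ≫
            (biproduct.ι g i ≫ e.inv) := by simp only [Category.assoc]
      _ = 0 := by rw [hrs0]; simp

end Aux

theorem stmt_9 [Preadditive C] [HasFiniteBiproducts C] [KrullSchmidtCat C]
    {X Y : C} (f : X ⟶ Y) (Cd : C) (hdet : RightDetermined f Cd)
    (C' : C) (hind : Indec C') (f' : C' ⟶ Y) (haf : AlmostFactorsThrough f' f) :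
    IsSummand C' Cd := by
  have hh : ∃ h : Cd ⟶ C', ¬ ∃ s : Cd ⟶ X, h ≫ f' = s ≫ f := by
    by_contra hc
    push_neg at hc
    exact haf.1 (hdet f' hc)
  obtain ⟨h, hhf⟩ := hh
  have hnr : ¬ radHom h := fun hr => hhf (haf.2 h hr)
  rw [radHom] at hnr
  push_neg at hnr
  obtain ⟨u, hu⟩ := hnr
  haveI hloc := isLocalRing_End_of_indec C' hind
  have hunit : IsUnit (show CategoryTheory.End C' from u ≫ h) :=
    aux_isUnit_of_not_mem_jacobson_bot hu
  rcases isUnit_iff_exists.mp hunit with ⟨b, hb1, hb2⟩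
  refine ⟨b ≫ u, h, ?_⟩
  have hb1' : b ≫ (u ≫ h) = 𝟙 C' := hb1
  rw [Category.assoc]
  exact hb1'
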